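/- Let 𝒜, 𝒜′, ℱ be finite-dimensional 𝔽₂-vector spaces with symmetric nondegenerate 𝔽₂-bilinear forms ω, ω′, λ respectively. Let φ : 𝒜 → ℱ, ψ : ℱ → 𝒜 satisfy λ(φ(A), f) = ω(A, ψ(f)) for all A, f, and let φ′ : 𝒜′ → ℱ, ψ′ : ℱ → 𝒜′ satisfy λ(φ′(A′), f) = ω′(A′, ψ′(f)) for all A′, f. Then the composite BrLE rule holds: (ker(ψ′ ∘ φ))^{⊥ω} = range(ψ ∘ φ′). (The composite gauge structure of two stabilizer codes on the same qubits again satisfies the braiding relation ω′(ψ′φ(A), A′) = λ(φ(A), φ′(A′)) = ω(A, ψφ′(A′)), and hence its BrLE rule.) -/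

import Mathlib

/-- **Composite BrLE rule**: for two linear gauge structures sharing the field space `F`,
the composite gauge structure (with maps `ψ' ∘ φ : A → A'` and `ψ ∘ φ' : A' → A`)
satisfies `(ker(ψ' ∘ φ))^{⊥ω} = range(ψ ∘ φ')`. -/
theorem composite_brle_rule {A A' F : Type*}
    [AddCommGroup A] [Module (ZMod 2) A] [FiniteDimensional (ZMod 2) A]
    [AddCommGroup A'] [Module (ZMod 2) A'] [FiniteDimensional (ZMod 2) A']
    [AddCommGroup F] [Module (ZMod 2) F] [FiniteDimensional (ZMod 2) F]
    (ω : LinearMap.BilinForm (ZMod 2) A) (ω' : LinearMap.BilinForm (ZMod 2) A')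
    (lam : LinearMap.BilinForm (ZMod 2) F)
    (hωsymm : ∀ a b, ω a b = ω b a)
    (hωnondeg : ∀ a, (∀ b, ω a b = 0) → a = 0)
    (hω'symm : ∀ a b, ω' a b = ω' b a)
    (hω'nondeg : ∀ a, (∀ b, ω' a b = 0) → a = 0)
    (hlam_symm : ∀ f g, lam f g = lam g f)
    (hlam_nondeg : ∀ f, (∀ g, lam f g = 0) → f = 0)
    (φ : A →ₗ[ZMod 2] F) (ψ : F →ₗ[ZMod 2] A)
    (hadj : ∀ a f, lam (φ a) f = ω a (ψ f))
    (φ' : A' →ₗ[ZMod 2] F) (ψ' : F →ₗ[ZMod 2] A')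
    (hadj' : ∀ a' f, lam (φ' a') f = ω' a' (ψ' f)) :
    {b : A | ∀ c ∈ LinearMap.ker (ψ'.comp φ), ω c b = 0}
      = (LinearMap.range (ψ.comp φ') : Set A) := by
  have hrefl : ω.IsRefl := fun a b h => by rw [hωsymm]; exact h
  have hnd : ω.Nondegenerate := (LinearMap.IsRefl.nondegenerate_iff_separatingLeft hrefl).mpr hωnondeg
  -- key computation: ω ((ψ∘φ') a') b = ω' a' ((ψ'∘φ) b)
  have key : ∀ (a' : A') (b : A), ω ((ψ.comp φ') a') b = ω' a' ((ψ'.comp φ) b) := by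
    intro a' b
    have h1 : ω ((ψ.comp φ') a') b = ω b (ψ (φ' a')) := by
      rw [hωsymm]; rfl
    rw [h1, ← hadj b (φ' a'), hlam_symm, hadj' a' (φ b)]
    rfl
  -- orthogonal of range (ψ∘φ') = ker (ψ'∘φ)
  have horth : ω.orthogonal (LinearMap.range (ψ.comp φ')) = LinearMap.ker (ψ'.comp φ) := by
    ext b
    rw [LinearMap.BilinForm.mem_orthogonal_iff, LinearMap.mem_ker]
    constructor
    · intro h
      apply hω'nondeg
      intro a'
      rw [hω'symm, ← key a' b]
      exact h _ ⟨a', rfl⟩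
    · rintro h _ ⟨a', rfl⟩
      show ω ((ψ.comp φ') a') b = 0
      rw [key a' b, h, map_zero]
  have hmain : ω.orthogonal (LinearMap.ker (ψ'.comp φ)) = LinearMap.range (ψ.comp φ') := by
    rw [← horth, LinearMap.BilinForm.orthogonal_orthogonal hnd hrefl]
  ext b
  constructor
  · intro hb
    have : b ∈ ω.orthogonal (LinearMap.ker (ψ'.comp φ)) := by
      rw [LinearMap.BilinForm.mem_orthogonal_iff]
      exact fun c hc => hb c hc
    rw [hmain] at this
    exact this
  · intro hb c hc
    have : b ∈ ω.orthogonal (LinearMap.ker (ψ'.comp φ)) := by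
      rw [hmain]; exact hb
    exact this c hc
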